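/- Let M be a perfect matching in the bipartite graph H constructed from a directed graph G with source s and sink t (vertices v_in for v ≠ s, v_out for v ≠ t; edges (u_out, v_in) for each directed edge (u,v) of G with v ≠ s, u ≠ t; edges (v_in, v_out) for v ≠ s,t). Define S = {(u,v) : (u_out, v_in) ∈ M, u ≠ v}. Then the directed graph (V, S) has every vertex with in-degree and out-degree at most 1, s has out-degree 1 and in-degree 0, t has in-degree 1 and out-degree 0, and for every v ≠ s,t, in-degree 1 implies out-degree 1; consequently S contains a directed path from s to t. -/
import Mathlib


theorem stmt_14 {V : Type*} [Fintype V] [DecidableEq V] (E : V → V → Prop)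
    (s t : V) (hst : s ≠ t)
    (M : (SimpleGraph.fromRel
        (fun p q : ({v : V // v ≠ s} ⊕ {v : V // v ≠ t}) =>
          match p, q with
          | Sum.inr u, Sum.inl v => E u.1 v.1 ∨ u.1 = v.1
          | _, _ => False)).Subgraph)
    (hM : M.IsPerfectMatching) :
    let R : V → V → Prop := fun u v =>
      u ≠ v ∧ ∃ (hu : u ≠ t) (hv : v ≠ s), M.Adj (Sum.inr ⟨u, hu⟩) (Sum.inl ⟨v, hv⟩)
    (∀ u v v', R u v → R u v' → v = v') ∧
    (∀ u u' v, R u v → R u' v → u = u') ∧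
    (∃ w, R s w) ∧ (∀ u, ¬ R u s) ∧ (∃ u, R u t) ∧ (∀ w, ¬ R t w) ∧
    (∀ v, v ≠ s → v ≠ t → (∃ u, R u v) → ∃ w, R v w) ∧
    Relation.ReflTransGen R s t := by
  classical
  intro R
  -- out-functionality
  have hfun : ∀ u v v', R u v → R u v' → v = v' := by
    rintro u v v' ⟨_, hu, hv, h1⟩ ⟨_, hu', hv', h2⟩
    obtain ⟨q, _, huniq⟩ := hM.1 (hM.2 (Sum.inr ⟨u, hu⟩))
    have e1 := huniq _ h1
    have e2 := huniq _ h2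
    rw [← e2] at e1
    exact congrArg Subtype.val (Sum.inl.inj e1)
  -- in-functionality
  have hinj : ∀ u u' v, R u v → R u' v → u = u' := by
    rintro u u' v ⟨_, hu, hv, h1⟩ ⟨_, hu', hv', h2⟩
    obtain ⟨q, _, huniq⟩ := hM.1 (hM.2 (Sum.inl ⟨v, hv⟩))
    have e1 := huniq _ h1.symm
    have e2 := huniq _ h2.symm
    rw [← e2] at e1
    exact congrArg Subtype.val (Sum.inr.inj e1)
  -- s has an out-edge
  have hsrc : ∃ w, R s w := by
    obtain ⟨q, hq, _⟩ := hM.1 (hM.2 (Sum.inr ⟨s, hst⟩))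
    have hG := M.adj_sub hq
    rw [SimpleGraph.fromRel_adj] at hG
    cases q with
    | inl w => exact ⟨w.1, Ne.symm w.2, hst, w.2, hq⟩
    | inr w => rcases hG.2 with h | h <;> exact h.elim
  -- nothing enters s
  have hns : ∀ u, ¬ R u s := by
    rintro u ⟨_, hu, hv, _⟩
    exact hv rfl
  -- t has an in-edge
  have hsnk : ∃ u, R u t := by
    obtain ⟨q, hq, _⟩ := hM.1 (hM.2 (Sum.inl ⟨t, Ne.symm hst⟩))
    have hG := M.adj_sub hq
    rw [SimpleGraph.fromRel_adj] at hG
    cases q with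
    | inl w => rcases hG.2 with h | h <;> exact h.elim
    | inr w => exact ⟨w.1, w.2, w.2, Ne.symm hst, hq.symm⟩
  -- nothing leaves t
  have hnt : ∀ w, ¬ R t w := by
    rintro w ⟨_, hu, hv, _⟩
    exact hu rfl
  -- intermediate vertices pass through
  have hmid : ∀ v, v ≠ s → v ≠ t → (∃ u, R u v) → ∃ w, R v w := by
    rintro v hvs hvt ⟨u, huv, hu, hv, hadj⟩
    obtain ⟨q, hq, _⟩ := hM.1 (hM.2 (Sum.inr ⟨v, hvt⟩))
    have hG := M.adj_sub hq
    rw [SimpleGraph.fromRel_adj] at hG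
    cases q with
    | inl w =>
      refine ⟨w.1, ?_, hvt, w.2, hq⟩
      intro hvw
      obtain ⟨q', _, huniq⟩ := hM.1 (hM.2 (Sum.inl ⟨v, hv⟩))
      have e1 := huniq _ hadj.symm
      have hq' : M.Adj (Sum.inl (⟨v, hv⟩ : {v : V // v ≠ s})) (Sum.inr ⟨v, hvt⟩) := by
        have : w = (⟨v, hv⟩ : {v : V // v ≠ s}) := Subtype.ext hvw.symm
        rw [this] at hq
        exact hq.symm
      have e2 := huniq _ hq'
      rw [← e2] at e1
      exact huv (congrArg Subtype.val (Sum.inr.inj e1))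
    | inr w => rcases hG.2 with h | h <;> exact h.elim
  refine ⟨hfun, hinj, hsrc, hns, hsnk, hnt, hmid, ?_⟩
  -- the path from s to t
  by_contra hreach
  have step : ∀ x, Relation.ReflTransGen R s x → ∃ w, R x w := by
    intro x hx
    rcases Relation.ReflTransGen.cases_tail hx with rfl | ⟨c, _, hc⟩
    · exact hsrc
    · have hxs : x ≠ s := fun h => hns c (h ▸ hc)
      have hxt : x ≠ t := fun h => hreach (h ▸ hx)
      exact hmid x hxs hxt ⟨c, hc⟩
  choose g hg using step
  let T := {x // Relation.ReflTransGen R s x}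
  let f : T → T := fun x => ⟨g x.1 x.2, x.2.tail (hg x.1 x.2)⟩
  have hf : Function.Injective f := by
    intro a b hab
    have hval : g a.1 a.2 = g b.1 b.2 := congrArg Subtype.val hab
    have h1 := hg a.1 a.2
    rw [hval] at h1
    exact Subtype.ext (hinj _ _ _ h1 (hg b.1 b.2))
  obtain ⟨a, ha⟩ := Finite.injective_iff_surjective.mp hf ⟨s, Relation.ReflTransGen.refl⟩
  have hgs : g a.1 a.2 = s := congrArg Subtype.val ha
  have h2 := hg a.1 a.2
  rw [hgs] at h2
  exact hns a.1 h2
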